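/- Let q be a prime power, f ∈ F_q[x] a monic irreducible polynomial of degree d, e and b positive integers, and let J = J_{f^e} ∈ F_q^{de×de} be the Jordan block of f^e. Then the number of matrices V ∈ F_q^{de×b} such that minpoly(J̄·V) = f^e equals (1 − 1/q^{db})·q^{deb}; i.e., for uniformly random V the probability that minpoly(J̄·V) = f^e is 1 − 1/q^{db}, independent of e. -/

import Mathlib

open Matrix Polynomial

/-- `p` annihilates the matrix sequence `S`, i.e. `p(S) = 0`:
for every `k`, `∑ i, (coeff p i) • S (i + k) = 0`. -/
def AnnPoly {F : Type} [Field F] {α β : Type} (p : Polynomial F)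
    (S : ℕ → Matrix α β F) : Prop :=
  ∀ k : ℕ, (p.sum fun i a => a • S (i + k)) = 0

open scoped Classical in
/-- The minimal generating polynomial of a matrix sequence: the unique monic
polynomial annihilating `S` that divides every annihilator of `S`
(`0` if no such polynomial exists). -/
noncomputable def seqMinpoly {F : Type} [Field F] {α β : Type}
    (S : ℕ → Matrix α β F) : Polynomial F :=
  if h : ∃ p : Polynomial F, p.Monic ∧ AnnPoly p S ∧ ∀ g : Polynomial F, AnnPoly g S → p ∣ g
  then h.choose else 0

/-- `pmp F b A` : the fraction of pairs `(U, V)` for which the projected sequence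
`(U * A^k * V)_k` has the same minimal polynomial as the sequence `(A^k)_k`. -/
noncomputable def pmp (F : Type) [Field F] [Fintype F] (b : ℕ)
    {ι : Type} [Fintype ι] [DecidableEq ι] (A : Matrix ι ι F) : ℚ :=
  (Nat.card {UV : Matrix (Fin b) ι F × Matrix ι (Fin b) F //
      seqMinpoly (fun k => UV.1 * A ^ k * UV.2) = seqMinpoly (fun k => A ^ k)} : ℚ) /
  (Nat.card (Matrix (Fin b) ι F × Matrix ι (Fin b) F) : ℚ)

/-- The companion matrix of a monic polynomial `f` of degree `d`:
ones on the subdiagonal, last column `(-f_0, …, -f_{d-1})ᵀ`. -/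
def companion {F : Type} [Field F] (d : ℕ) (f : Polynomial F) :
    Matrix (Fin d) (Fin d) F :=
  Matrix.of fun i j => (if (i : ℕ) = (j : ℕ) + 1 then 1 else 0) +
    (if (j : ℕ) = d - 1 then -f.coeff (i : ℕ) else 0)

/-- The Jordan block `J_{f^e}` of `f^e` (`f` of degree `d`): `e` diagonal blocks `C_f`
and identity blocks on the first block subdiagonal. -/
def jordanBlock {F : Type} [Field F] (d e : ℕ) (f : Polynomial F) :
    Matrix (Fin e × Fin d) (Fin e × Fin d) F :=
  Matrix.of fun p q =>
    if p.1 = q.1 then companion d f p.2 q.2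
    else if (p.1 : ℕ) = (q.1 : ℕ) + 1 then (if p.2 = q.2 then 1 else 0) else 0


namespace Stmt4Aux
open Kronecker
variable {F : Type} [Field F]

noncomputable def vecOf (d : ℕ) (f r : Polynomial F) : Fin d → F :=
  fun i => (r %ₘ f).coeff i

variable {d : ℕ} {f : Polynomial F}

theorem modX (hm : f.Monic) (hd : f.natDegree = d) (hdpos : 0 < d) (r : Polynomial F) :
    (X * r) %ₘ f = X * (r %ₘ f) - Polynomial.C ((r %ₘ f).coeff (d-1)) * f := by
  have hdeg : f.degree = (d : ℕ) := by rw [← hd]; exact (degree_eq_natDegree hm.ne_zero)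
  set s := r %ₘ f with hs
  have hsdeg : s.degree < f.degree := degree_modByMonic_lt r hm
  set c := s.coeff (d - 1) with hc
  set u := X * s - Polynomial.C c * f with hu
  have hudeg : u.degree < f.degree := by
    rw [hdeg]
    rw [degree_lt_iff_coeff_zero]
    intro m hm'
    have hmn : (d : ℕ) ≤ m := by exact_mod_cast hm'
    have h1 : 1 ≤ m := le_trans hdpos hmn
    obtain ⟨m', rfl⟩ : ∃ m', m = m' + 1 := ⟨m - 1, (Nat.succ_pred_eq_of_pos h1).symm⟩
    simp only [hu, coeff_sub, coeff_X_mul, coeff_C_mul]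
    rcases eq_or_lt_of_le hmn with heq | hlt
    · have hm'd : m' = d - 1 := by omega
      have : f.coeff (m' + 1) = 1 := by
        rw [← heq, ← hd]; exact hm.coeff_natDegree
      rw [this, hm'd, ← hc]; ring
    · have h2 : s.coeff m' = 0 := by
        apply coeff_eq_zero_of_degree_lt
        calc s.degree < f.degree := hsdeg
        _ = (d : ℕ) := hdeg
        _ ≤ (m' : WithBot ℕ) := by exact_mod_cast (by omega : d ≤ m')
      have h3 : f.coeff (m' + 1) = 0 := by
        apply coeff_eq_zero_of_natDegree_lt; omega
      rw [h2, h3]; ring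
  have step1 : (X * r) %ₘ f = (X * s) %ₘ f := by
    conv_lhs => rw [← modByMonic_add_div r f]
    rw [mul_add, show X * (f * (r /ₘ f)) = f * (X * (r /ₘ f)) by ring, add_modByMonic]
    rw [(modByMonic_eq_zero_iff_dvd hm).mpr (Dvd.intro _ rfl), add_zero]
  have step2 : (X * s) %ₘ f = u := by
    have : X * s = u + Polynomial.C c * f := by rw [hu]; ring
    rw [this, add_modByMonic, (modByMonic_eq_zero_iff_dvd hm).mpr (dvd_mul_left f (Polynomial.C c)), add_zero]
    exact (modByMonic_eq_self_iff hm).mpr hudeg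
  rw [step1, step2]

theorem mulVec_vecOf (hm : f.Monic) (hd : f.natDegree = d) (hdpos : 0 < d) (r : Polynomial F) :
    companion d f *ᵥ vecOf d f r = vecOf d f (X * r) := by
  set s := r %ₘ f with hs
  funext i
  have hrhs : vecOf d f (X * r) i =
      (if (i : ℕ) = 0 then 0 else s.coeff ((i : ℕ) - 1)) - s.coeff (d-1) * f.coeff (i : ℕ) := by
    unfold vecOf
    rw [modX hm hd hdpos r, coeff_sub, coeff_C_mul, ← hs]
    congr 1
    by_cases hi : (i : ℕ) = 0
    · rw [hi, if_pos rfl, coeff_X_mul_zero]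
    · rw [if_neg hi]
      obtain ⟨i', hi'⟩ : ∃ i', (i : ℕ) = i' + 1 := ⟨(i : ℕ) - 1, by omega⟩
      rw [hi', coeff_X_mul]
      simp
  rw [hrhs]
  show ∑ j : Fin d, companion d f i j * s.coeff (j : ℕ) = _
  have hcomp : ∀ j : Fin d, companion d f i j =
      (if (i : ℕ) = (j : ℕ) + 1 then 1 else 0) +
      (if (j : ℕ) = d - 1 then -f.coeff (i : ℕ) else 0) := fun j => rfl
  simp only [hcomp, add_mul]
  rw [Finset.sum_add_distrib]
  have e1 : ∑ j : Fin d, (if (i : ℕ) = (j : ℕ) + 1 then (1:F) else 0) * s.coeff (j : ℕ) =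
      (if (i : ℕ) = 0 then 0 else s.coeff ((i : ℕ) - 1)) := by
    by_cases hi : (i : ℕ) = 0
    · rw [if_pos hi]
      apply Finset.sum_eq_zero
      intro j _
      rw [if_neg (by omega), zero_mul]
    · rw [if_neg hi]
      have hlt : (i : ℕ) - 1 < d := lt_of_le_of_lt (Nat.sub_le _ _) i.isLt
      rw [Finset.sum_eq_single (⟨(i : ℕ) - 1, hlt⟩ : Fin d)]
      · rw [if_pos (by simp; omega), one_mul]
      · intro j _ hj
        rw [if_neg, zero_mul]
        intro hcon
        exact hj (Fin.ext (by simp; omega))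
      · intro h; exact absurd (Finset.mem_univ _) h
  have e2 : ∑ j : Fin d, (if (j : ℕ) = d - 1 then -f.coeff (i : ℕ) else 0) * s.coeff (j : ℕ) =
      - (f.coeff (i : ℕ) * s.coeff (d-1)) := by
    have hlt : d - 1 < d := by omega
    rw [Finset.sum_eq_single (⟨d - 1, hlt⟩ : Fin d)]
    · rw [if_pos rfl]; ring_nf
    · intro j _ hj
      rw [if_neg, zero_mul]
      intro hcon
      exact hj (Fin.ext hcon)
    · intro h; exact absurd (Finset.mem_univ _) h
  rw [e1, e2]; ring


theorem vecOf_add (r₁ r₂ : Polynomial F) :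
    vecOf d f (r₁ + r₂) = vecOf d f r₁ + vecOf d f r₂ := by
  funext i; simp [vecOf, add_modByMonic]

theorem vecOf_smul (c : F) (r : Polynomial F) :
    vecOf d f (c • r) = c • vecOf d f r := by
  funext i; simp [vecOf, smul_modByMonic]

theorem pow_mulVec (hm : f.Monic) (hd : f.natDegree = d) (hdpos : 0 < d)
    (n : ℕ) (r : Polynomial F) :
    (companion d f) ^ n *ᵥ vecOf d f r = vecOf d f (X ^ n * r) := by
  induction n with
  | zero => simp [vecOf]
  | succ n ih =>
    rw [pow_succ', ← Matrix.mulVec_mulVec, ih, mulVec_vecOf hm hd hdpos]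
    congr 1; ring

theorem aeval_mulVec (hm : f.Monic) (hd : f.natDegree = d) (hdpos : 0 < d)
    (p r : Polynomial F) :
    (aeval (companion d f) p) *ᵥ vecOf d f r = vecOf d f (p * r) := by
  induction p using Polynomial.induction_on' with
  | add p q hp hq =>
    rw [map_add, Matrix.add_mulVec, hp, hq, add_mul, vecOf_add]
  | monomial n a =>
    rw [aeval_monomial, Algebra.algebraMap_eq_smul_one, smul_mul_assoc, one_mul,
      Matrix.smul_mulVec, pow_mulVec hm hd hdpos, ← vecOf_smul]
    congr 1
    rw [smul_eq_C_mul, ← mul_assoc, C_mul_X_pow_eq_monomial]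

theorem aeval_companion (hm : f.Monic) (hd : f.natDegree = d) (hdpos : 0 < d) :
    aeval (companion d f) f = 0 := by
  ext i j
  have h1 : vecOf d f (X ^ (j : ℕ)) = Pi.single j 1 := by
    funext i'
    unfold vecOf
    rw [(modByMonic_eq_self_iff hm).mpr, coeff_X_pow]
    · rw [Pi.single_apply]
      by_cases h : i' = j
      · simp [h]
      · rw [if_neg (fun hc => h (Fin.ext hc)), if_neg h]
    · rw [degree_X_pow, degree_eq_natDegree hm.ne_zero, hd]
      exact_mod_cast j.isLt
  have h2 := aeval_mulVec hm hd hdpos f (X ^ (j : ℕ))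
  rw [h1] at h2
  have h3 : vecOf d f (f * X ^ (j : ℕ)) = 0 := by
    funext i'
    unfold vecOf
    rw [(modByMonic_eq_zero_iff_dvd hm).mpr (dvd_mul_right f _)]
    simp
  rw [h3, Matrix.mulVec_single] at h2
  have := congrFun h2 i
  simpa using this


def shiftM (F : Type) [Field F] (e : ℕ) : Matrix (Fin e) (Fin e) F :=
  Matrix.of fun i j => if (i : ℕ) = (j : ℕ) + 1 then 1 else 0

theorem shiftM_pow (e k : ℕ) : (shiftM F e) ^ k =
    Matrix.of fun (i j : Fin e) => if (i : ℕ) = (j : ℕ) + k then (1:F) else 0 := by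
  induction k with
  | zero =>
    ext i j
    simp [Matrix.one_apply, Fin.ext_iff, eq_comm]
  | succ k ih =>
    rw [pow_succ, ih]
    ext i j
    show (∑ m : Fin e, (if (i : ℕ) = (m : ℕ) + k then (1:F) else 0) *
      (if (m : ℕ) = (j : ℕ) + 1 then (1:F) else 0)) = _
    by_cases hj : (j : ℕ) + 1 < e
    · rw [Finset.sum_eq_single (⟨(j : ℕ) + 1, hj⟩ : Fin e)]
      · show (if (i:ℕ) = (j:ℕ)+1+k then (1:F) else 0) *
            (if ((j:ℕ)+1 = (j:ℕ)+1) then (1:F) else 0) = _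
        rw [if_pos rfl, mul_one]
        show _ = (if ((i:ℕ) = (j:ℕ)+(k+1)) then (1:F) else 0)
        by_cases hij : (i : ℕ) = (j : ℕ) + 1 + k
        · rw [if_pos hij, if_pos (by omega)]
        · rw [if_neg hij, if_neg (by omega)]
      · intro m _ hm
        have h2 : (if ((m:ℕ) = (j:ℕ)+1) then (1:F) else 0) = 0 :=
          if_neg (fun hc => hm (Fin.ext (by simpa using hc)))
        show (if (i:ℕ) = (m:ℕ)+k then (1:F) else 0) *
            (if ((m:ℕ) = (j:ℕ)+1) then (1:F) else 0) = 0
        rw [h2, mul_zero]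
      · intro h; exact absurd (Finset.mem_univ _) h
    · have hi := i.isLt
      rw [Finset.sum_eq_zero, Matrix.of_apply, if_neg (by omega)]
      intro m _
      have h2 : (if ((m:ℕ) = (j:ℕ)+1) then (1:F) else 0) = 0 :=
        if_neg (by have := m.isLt; omega)
      show (if (i:ℕ) = (m:ℕ)+k then (1:F) else 0) *
          (if ((m:ℕ) = (j:ℕ)+1) then (1:F) else 0) = 0
      rw [h2, mul_zero]

theorem shiftM_pow_self (e : ℕ) : (shiftM F e) ^ e = 0 := by
  rw [shiftM_pow]
  ext i j
  simp only [Matrix.of_apply, Matrix.zero_apply]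
  rw [if_neg (by omega)]

theorem jordan_decomp (d e : ℕ) (f : Polynomial F) :
    jordanBlock d e f = (1 : Matrix (Fin e) (Fin e) F) ⊗ₖ companion d f +
      shiftM F e ⊗ₖ (1 : Matrix (Fin d) (Fin d) F) := by
  ext ⟨p1, p2⟩ ⟨q1, q2⟩
  show (if p1 = q1 then companion d f p2 q2
      else if (p1 : ℕ) = (q1 : ℕ) + 1 then (if p2 = q2 then (1:F) else 0) else 0) =
    (1 : Matrix (Fin e) (Fin e) F) p1 q1 * companion d f p2 q2 +
      shiftM F e p1 q1 * (1 : Matrix (Fin d) (Fin d) F) p2 q2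
  rw [Matrix.one_apply, Matrix.one_apply]
  show _ = (if p1 = q1 then (1:F) else 0) * _ +
    (if (p1 : ℕ) = (q1 : ℕ) + 1 then (1:F) else 0) * (if p2 = q2 then (1:F) else 0)
  by_cases h : p1 = q1
  · rw [if_pos h, if_pos h, one_mul, if_neg (by subst h; omega), zero_mul, add_zero]
  · rw [if_neg h, if_neg h, zero_mul, zero_add]
    by_cases h2 : (p1 : ℕ) = (q1 : ℕ) + 1
    · rw [if_pos h2, if_pos h2, one_mul]
    · rw [if_neg h2, if_neg h2, zero_mul]

variable {ι : Type} [Fintype ι] [DecidableEq ι]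

theorem natCast_mat (c : ℕ) : ((c : ℕ) : Matrix ι ι F) = (c : F) • (1 : Matrix ι ι F) := by
  rw [Nat.cast_smul_eq_nsmul, nsmul_eq_mul, mul_one]

/-- Taylor expansion with Hasse derivatives for commuting matrices, truncated at `N^e = 0`. -/
theorem taylor_aeval (A N : Matrix ι ι F) (h : Commute A N) {e : ℕ} (hN : N ^ e = 0)
    (p : Polynomial F) :
    aeval (A + N) p = ∑ j ∈ Finset.range e, aeval A (hasseDeriv j p) * N ^ j := by
  induction p using Polynomial.induction_on' with
  | add p q hp hq =>
    rw [map_add, hp, hq, ← Finset.sum_add_distrib]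
    exact Finset.sum_congr rfl fun j _ => by rw [map_add, map_add, add_mul]
  | monomial n a =>
    have key : ∀ m : ℕ, aeval A (hasseDeriv m (monomial n a)) * N ^ m
        = ((n.choose m : F) * a) • (A ^ (n - m) * N ^ m) := by
      intro m
      rw [hasseDeriv_monomial, aeval_monomial, Algebra.algebraMap_eq_smul_one,
        smul_mul_assoc, one_mul, smul_mul_assoc]
    have lhs : aeval (A + N) (monomial n a)
        = ∑ m ∈ Finset.range (n + 1), ((n.choose m : F) * a) • (A ^ (n - m) * N ^ m) := by
      rw [aeval_monomial, Algebra.algebraMap_eq_smul_one, smul_mul_assoc, one_mul,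
        add_comm A N, h.symm.add_pow, Finset.smul_sum]
      refine Finset.sum_congr rfl fun m _ => ?_
      rw [natCast_mat, mul_smul_comm, mul_one, (h.symm.pow_pow m (n - m)).eq,
        smul_smul, mul_comm a]
    rw [lhs]
    rw [show (∑ j ∈ Finset.range e, aeval A (hasseDeriv j (monomial n a)) * N ^ j)
      = ∑ j ∈ Finset.range e, ((n.choose j : F) * a) • (A ^ (n - j) * N ^ j) from
      Finset.sum_congr rfl fun j _ => key j]
    set M := max e (n + 1) with hM
    rw [show (∑ m ∈ Finset.range (n+1), ((n.choose m : F) * a) • (A ^ (n - m) * N ^ m))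
        = ∑ m ∈ Finset.range M, ((n.choose m : F) * a) • (A ^ (n - m) * N ^ m) from
      Finset.sum_subset (Finset.range_subset_range.mpr (le_max_right _ _)) (fun m _ hm => by
        rw [Nat.choose_eq_zero_of_lt (by simp at hm ⊢; omega), Nat.cast_zero, zero_mul,
          zero_smul])]
    exact (Finset.sum_subset (Finset.range_subset_range.mpr (le_max_left _ _)) (fun m _ hm => by
      rw [pow_eq_zero_of_le (by simp at hm ⊢; omega) hN, mul_zero, smul_zero])).symm


theorem hasseDeriv_pow_dvd (f : Polynomial F) :
    ∀ e j : ℕ, j ≤ e → f ^ (e - j) ∣ hasseDeriv j (f ^ e) := by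
  intro e
  induction e with
  | zero => intro j hj; interval_cases j; simp
  | succ e ih =>
    intro j hj
    rw [pow_succ, mul_comm, hasseDeriv_mul]
    apply Finset.dvd_sum
    rintro ⟨i, k⟩ hik
    rw [Finset.HasAntidiagonal.mem_antidiagonal] at hik
    rcases Nat.eq_zero_or_pos i with hi | hi
    · subst hi
      simp only [hasseDeriv_zero'] at *
      rcases Nat.lt_or_ge k (e + 1) with hk | hk
      · have h1 : f ^ (e - k) ∣ hasseDeriv k (f ^ e) := ih k (by omega)
        have : f ^ (e + 1 - j) ∣ f * f ^ (e - k) := by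
          rw [← pow_succ']
          exact pow_dvd_pow f (by omega)
        exact this.trans (mul_dvd_mul_left f h1)
      · have : j = e + 1 := by omega
        simp [this]
    · have hk : k ≤ e := by omega
      have h1 : f ^ (e - k) ∣ hasseDeriv k (f ^ e) := ih k hk
      have h2 : f ^ (e + 1 - j) ∣ f ^ (e - k) := pow_dvd_pow f (by omega)
      exact dvd_mul_of_dvd_right (h2.trans h1) _

theorem hasseDeriv_pow_top (f : Polynomial F) :
    ∀ e : ℕ, f ∣ hasseDeriv e (f ^ e) - (derivative f) ^ e := by
  intro e
  induction e with
  | zero => simp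
  | succ e ih =>
    rw [pow_succ, mul_comm, hasseDeriv_mul]
    have hmem : ((1 : ℕ), e) ∈ Finset.HasAntidiagonal.antidiagonal (e + 1) := by
      rw [Finset.HasAntidiagonal.mem_antidiagonal]; omega
    rw [← Finset.add_sum_erase _ _ hmem]
    have hmain : f ∣ hasseDeriv 1 f * hasseDeriv e (f ^ e) - derivative f ^ (e + 1) := by
      rw [hasseDeriv_one', pow_succ']
      have : derivative f * hasseDeriv e (f ^ e) - derivative f * derivative f ^ e
          = derivative f * (hasseDeriv e (f ^ e) - derivative f ^ e) := by ring
      rw [this]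
      exact dvd_mul_of_dvd_right ih _
    have hrest : f ∣ ∑ ij ∈ (Finset.HasAntidiagonal.antidiagonal (e + 1)).erase (1, e),
        hasseDeriv ij.1 f * hasseDeriv ij.2 (f ^ e) := by
      apply Finset.dvd_sum
      rintro ⟨i, k⟩ hik
      rw [Finset.mem_erase, Finset.HasAntidiagonal.mem_antidiagonal] at hik
      obtain ⟨hne, hiksum⟩ := hik
      rcases Nat.eq_zero_or_pos i with hi | hi
      · subst hi
        simp only [hasseDeriv_zero']
        exact dvd_mul_of_dvd_left dvd_rfl _
      · have hk : k < e := by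
          by_contra hcon
          push_neg at hcon
          have hi1 : i = 1 := by omega
          have hke : k = e := by omega
          subst hi1; subst hke
          exact hne rfl
        have h1 : f ^ (e - k) ∣ hasseDeriv k (f ^ e) := hasseDeriv_pow_dvd f e k (by omega)
        have h2 : f ∣ f ^ (e - k) := dvd_pow_self f (by omega)
        exact dvd_mul_of_dvd_right (h2.trans h1) _
    have : hasseDeriv 1 f * hasseDeriv e (f ^ e) +
          (∑ ij ∈ (Finset.HasAntidiagonal.antidiagonal (e + 1)).erase (1, e),
            hasseDeriv ij.1 f * hasseDeriv ij.2 (f ^ e)) - derivative f ^ (e + 1)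
        = (hasseDeriv 1 f * hasseDeriv e (f ^ e) - derivative f ^ (e + 1)) +
          ∑ ij ∈ (Finset.HasAntidiagonal.antidiagonal (e + 1)).erase (1, e),
            hasseDeriv ij.1 f * hasseDeriv ij.2 (f ^ e) := by ring
    rw [this]
    exact dvd_add hmain hrest


section Kron
variable {d e : ℕ}

theorem one_kron_pow (C : Matrix (Fin d) (Fin d) F) (k : ℕ) :
    ((1 : Matrix (Fin e) (Fin e) F) ⊗ₖ C) ^ k = 1 ⊗ₖ (C ^ k) := by
  induction k with
  | zero => rw [pow_zero, pow_zero, Matrix.one_kronecker_one]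
  | succ k ih => rw [pow_succ, pow_succ, ih, ← Matrix.mul_kronecker_mul, Matrix.one_mul]

theorem shift_kron_pow (k : ℕ) :
    (shiftM F e ⊗ₖ (1 : Matrix (Fin d) (Fin d) F)) ^ k = ((shiftM F e) ^ k) ⊗ₖ (1 : Matrix (Fin d) (Fin d) F) := by
  induction k with
  | zero => rw [pow_zero, pow_zero, Matrix.one_kronecker_one]
  | succ k ih => rw [pow_succ, pow_succ, ih, ← Matrix.mul_kronecker_mul, Matrix.mul_one]

theorem commute_AN (C : Matrix (Fin d) (Fin d) F) :
    Commute ((1 : Matrix (Fin e) (Fin e) F) ⊗ₖ C) (shiftM F e ⊗ₖ 1) := by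
  unfold Commute SemiconjBy
  rw [← Matrix.mul_kronecker_mul, ← Matrix.mul_kronecker_mul, Matrix.one_mul, Matrix.mul_one,
    Matrix.one_mul, Matrix.mul_one]

theorem aeval_one_kron (C : Matrix (Fin d) (Fin d) F) (p : Polynomial F) :
    aeval ((1 : Matrix (Fin e) (Fin e) F) ⊗ₖ C) p = 1 ⊗ₖ aeval C p := by
  induction p using Polynomial.induction_on' with
  | add p q hp hq => rw [map_add, map_add, hp, hq, Matrix.kronecker_add]
  | monomial n a =>
    rw [aeval_monomial, aeval_monomial, Algebra.algebraMap_eq_smul_one,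
      Algebra.algebraMap_eq_smul_one, smul_mul_assoc, one_mul, smul_mul_assoc, one_mul,
      Matrix.kronecker_smul, one_kron_pow]

theorem aeval_jordan (hdpos : 0 < d) {f : Polynomial F} (hm : f.Monic)
    (hd : f.natDegree = d) (he : 0 < e) (p : Polynomial F) :
    aeval (jordanBlock d e f) p = ∑ j ∈ Finset.range e,
      ((shiftM F e) ^ j) ⊗ₖ (aeval (companion d f) (hasseDeriv j p)) := by
  rw [jordan_decomp]
  rw [taylor_aeval _ _ (commute_AN _) (by rw [shift_kron_pow, shiftM_pow_self e,
    Matrix.zero_kronecker])]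
  refine Finset.sum_congr rfl fun j _ => ?_
  rw [aeval_one_kron, shift_kron_pow, ← Matrix.mul_kronecker_mul, Matrix.one_mul, Matrix.mul_one]

theorem aeval_jordan_top (hdpos : 0 < d) {f : Polynomial F} (hm : f.Monic)
    (hd : f.natDegree = d) (he : 0 < e) :
    aeval (jordanBlock d e f) (f ^ e) = 0 := by
  rw [aeval_jordan hdpos hm hd he]
  apply Finset.sum_eq_zero
  intro j hj
  rw [Finset.mem_range] at hj
  obtain ⟨r, hr⟩ : f ∣ hasseDeriv j (f ^ e) :=
    (dvd_pow_self f (by omega : e - j ≠ 0)).trans (hasseDeriv_pow_dvd f e j hj.le)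
  rw [hr, _root_.map_mul, aeval_companion hm hd hdpos, zero_mul, Matrix.kronecker_zero]

theorem aeval_jordan_pred (hdpos : 0 < d) {f : Polynomial F} (hm : f.Monic)
    (hd : f.natDegree = d) (he : 0 < e) :
    aeval (jordanBlock d e f) (f ^ (e - 1)) =
      ((shiftM F e) ^ (e-1)) ⊗ₖ ((aeval (companion d f) (derivative f)) ^ (e-1)) := by
  rw [aeval_jordan hdpos hm hd he]
  rw [Finset.sum_eq_single (e - 1)]
  · obtain ⟨r, hr⟩ := hasseDeriv_pow_top f (e - 1)
    have : hasseDeriv (e-1) (f ^ (e-1)) = derivative f ^ (e-1) + f * r := by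
      rw [← hr]; ring
    rw [this, map_add, _root_.map_mul, aeval_companion hm hd hdpos, zero_mul, add_zero, map_pow]
  · intro j hj hne
    rw [Finset.mem_range] at hj
    obtain ⟨r, hr⟩ : f ∣ hasseDeriv j (f ^ (e-1)) :=
      (dvd_pow_self f (by omega : e - 1 - j ≠ 0)).trans
        (hasseDeriv_pow_dvd f (e-1) j (by omega))
    rw [hr, _root_.map_mul, aeval_companion hm hd hdpos, zero_mul, Matrix.kronecker_zero]
  · intro h
    exact absurd (Finset.mem_range.mpr (by omega)) h

end Kron

theorem isUnit_aeval_deriv [Finite F] {d : ℕ} {f : Polynomial F} (hm : f.Monic)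
    (hd : f.natDegree = d) (hdpos : 0 < d) (hirr : Irreducible f) :
    IsUnit (aeval (companion d f) (derivative f)) := by
  have hsep : f.Separable := PerfectField.separable_of_irreducible hirr
  obtain ⟨u, v, huv⟩ := hsep
  have h1 : aeval (companion d f) (u * f + v * derivative f) = 1 := by rw [huv, _root_.map_one]
  rw [map_add, _root_.map_mul, _root_.map_mul, aeval_companion hm hd hdpos, mul_zero,
    zero_add] at h1
  have h3 : aeval (companion d f) (derivative f) * aeval (companion d f) v = 1 := by
    rw [← _root_.map_mul, mul_comm, _root_.map_mul]
    exact h1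
  exact ⟨⟨_, aeval (companion d f) v, h3, mul_eq_one_comm.mp h3⟩, rfl⟩

theorem kron_mul_eq_zero_iff {d e b : ℕ} (he : 0 < e) (M : Matrix (Fin d) (Fin d) F)
    (hM : IsUnit M) (V : Matrix (Fin e × Fin d) (Fin b) F) :
    (((shiftM F e) ^ (e-1)) ⊗ₖ M) * V = 0 ↔
      (Matrix.of fun i j => V (⟨0, he⟩, i) j) = (0 : Matrix (Fin d) (Fin b) F) := by
  set W : Matrix (Fin d) (Fin b) F := Matrix.of fun i j => V (⟨0, he⟩, i) j with hW
  have hprod : ∀ (p1 : Fin e) (p2 : Fin d) (c : Fin b),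
      ((((shiftM F e) ^ (e-1)) ⊗ₖ M) * V) (p1, p2) c
        = if (p1 : ℕ) = e - 1 then (M * W) p2 c else 0 := by
    intro p1 p2 c
    rw [Matrix.mul_apply, Fintype.sum_prod_type, shiftM_pow]
    by_cases hp : (p1 : ℕ) = e - 1
    · rw [if_pos hp, Finset.sum_eq_single (⟨0, he⟩ : Fin e)]
      · rw [Matrix.mul_apply]
        refine Finset.sum_congr rfl fun q2 _ => ?_
        show (if (p1 : ℕ) = (0 : ℕ) + (e-1) then (1:F) else 0) * M p2 q2 * V (⟨0, he⟩, q2) c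
          = M p2 q2 * W q2 c
        rw [if_pos (by omega), one_mul, hW]
        rfl
      · intro q1 _ hq1
        apply Finset.sum_eq_zero
        intro q2 _
        show (if (p1 : ℕ) = (q1 : ℕ) + (e-1) then (1:F) else 0) * M p2 q2 * V (q1, q2) c = 0
        rw [if_neg (fun hc => hq1 (Fin.ext (by simp only [Fin.val_mk]; omega))), zero_mul, zero_mul]
      · intro h; exact absurd (Finset.mem_univ _) h
    · rw [if_neg hp]
      apply Finset.sum_eq_zero
      intro q1 _
      apply Finset.sum_eq_zero
      intro q2 _
      show (if (p1 : ℕ) = (q1 : ℕ) + (e-1) then (1:F) else 0) * M p2 q2 * V (q1, q2) c = 0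
      have hlt := p1.isLt
      rw [if_neg (by omega), zero_mul, zero_mul]
  constructor
  · intro h0
    have hMW : M * W = 0 := by
      ext p2 c
      have := congrFun (congrFun h0 (⟨e - 1, by omega⟩, p2)) c
      rw [hprod] at this
      rw [if_pos rfl] at this
      simpa using this
    obtain ⟨B, hB⟩ := hM.exists_left_inv
    calc W = (B * M) * W := by rw [hB, Matrix.one_mul]
    _ = B * (M * W) := by rw [Matrix.mul_assoc]
    _ = 0 := by rw [hMW, Matrix.mul_zero]
  · intro hW0
    ext ⟨p1, p2⟩ c
    rw [hprod, hW0, Matrix.mul_zero]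
    simp

section Seq
variable {α : Type} [Fintype α] [DecidableEq α] {b : ℕ}

theorem annPoly_iff (J : Matrix α α F) (V : Matrix α (Fin b) F) (p : Polynomial F) :
    AnnPoly p (fun k => J ^ k * V) ↔ aeval J p * V = 0 := by
  have key : ∀ k : ℕ, (p.sum fun i a => a • (J ^ (i + k) * V))
      = aeval J p * (J ^ k * V) := by
    intro k
    rw [aeval_def, eval₂_eq_sum, Polynomial.sum_def, Polynomial.sum_def, Matrix.sum_mul]
    refine Finset.sum_congr rfl fun i _ => ?_
    rw [Algebra.algebraMap_eq_smul_one, smul_mul_assoc, one_mul, Matrix.smul_mul,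
      pow_add, Matrix.mul_assoc]
  constructor
  · intro h
    have := h 0
    rw [show (fun k => J ^ k * V) = (fun k => J ^ k * V) from rfl] at this
    have h2 := key 0
    simp only [add_zero] at h2 this
    rw [h2, pow_zero, Matrix.one_mul] at this
    exact this
  · intro h k
    rw [key k]
    have hcomm : aeval J p * J ^ k = J ^ k * aeval J p := by
      have h1 : (J : Matrix α α F) ^ k = aeval J (X ^ k : Polynomial F) := by
        rw [map_pow, aeval_X]
      rw [h1, ← _root_.map_mul, ← _root_.map_mul, mul_comm]
    rw [← Matrix.mul_assoc, hcomm, Matrix.mul_assoc, h, Matrix.mul_zero]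

theorem seqMinpoly_eq {γ δ : Type} (S : ℕ → Matrix γ δ F) (p : Polynomial F)
    (hmon : p.Monic) (hann : AnnPoly p S) (hdvd : ∀ g, AnnPoly g S → p ∣ g) :
    seqMinpoly S = p := by
  have hex : ∃ q : Polynomial F, q.Monic ∧ AnnPoly q S ∧ ∀ g, AnnPoly g S → q ∣ g :=
    ⟨p, hmon, hann, hdvd⟩
  rw [seqMinpoly, dif_pos hex]
  obtain ⟨hm2, hann2, hdvd2⟩ := hex.choose_spec
  exact Polynomial.eq_of_monic_of_associated hm2 hmon
    (associated_of_dvd_dvd (hdvd2 p hann) (hdvd _ hann2))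

theorem minpoly_char (J : Matrix α α F) (V : Matrix α (Fin b) F) {f : Polynomial F}
    (hmonic : f.Monic) (hirr : Irreducible f) {e : ℕ} (he : 0 < e)
    (htop : aeval J (f ^ e) * V = 0) :
    (seqMinpoly (fun k => J ^ k * V) = f ^ e ↔ aeval J (f ^ (e-1)) * V ≠ 0) := by
  set I : Ideal (Polynomial F) :=
    { carrier := {p | aeval J p * V = 0}
      add_mem' := fun {x y} hx hy => by
        simp only [Set.mem_setOf_eq] at *
        rw [map_add, Matrix.add_mul, hx, hy, add_zero]
      zero_mem' := by simp
      smul_mem' := fun c {x} hx => by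
        simp only [smul_eq_mul, Set.mem_setOf_eq] at *
        rw [_root_.map_mul, Matrix.mul_assoc, hx, Matrix.mul_zero] } with hI
  have hmem : ∀ p : Polynomial F, p ∈ I ↔ aeval J p * V = 0 := fun p => Iff.rfl
  obtain ⟨g, hgspan⟩ := (IsPrincipalIdealRing.principal I).principal
  have hfe : (f : Polynomial F) ^ e ∈ I := (hmem _).mpr htop
  have hfne : (f : Polynomial F) ^ e ≠ 0 := (hmonic.pow e).ne_zero
  have hg0 : g ≠ 0 := by
    rintro rfl
    rw [hgspan, Submodule.mem_span_singleton] at hfe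
    obtain ⟨a, ha⟩ := hfe
    exact hfne (by rw [← ha, smul_zero])
  set G : Polynomial F := g * Polynomial.C (g.leadingCoeff)⁻¹ with hG
  have hGm : G.Monic := monic_mul_leadingCoeff_inv hg0
  have hassoc : Associated g G := by
    have hu : IsUnit (Polynomial.C (g.leadingCoeff)⁻¹) :=
      Polynomial.isUnit_C.mpr (isUnit_iff_ne_zero.mpr (inv_ne_zero (leadingCoeff_ne_zero.mpr hg0)))
    exact ⟨hu.unit, by rw [IsUnit.unit_spec]⟩
  have hspan_dvd : ∀ p : Polynomial F, p ∈ I ↔ g ∣ p := by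
    intro p
    rw [hgspan, Submodule.mem_span_singleton]
    constructor
    · rintro ⟨a, rfl⟩
      rw [smul_eq_mul]
      exact dvd_mul_left g a
    · rintro ⟨c, rfl⟩
      exact ⟨c, by rw [smul_eq_mul, mul_comm]⟩
  have hdvd_iff : ∀ p : Polynomial F, p ∈ I ↔ G ∣ p := fun p =>
    (hspan_dvd p).trans hassoc.dvd_iff_dvd_left
  have hseq : seqMinpoly (fun k => J ^ k * V) = G := by
    refine seqMinpoly_eq _ _ hGm ((annPoly_iff J V G).mpr ((hmem _).mp
      ((hdvd_iff G).mpr dvd_rfl))) fun g' hg' => ?_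
    exact (hdvd_iff g').mp ((hmem _).mpr ((annPoly_iff J V g').mp hg'))
  have hDpos : 0 < f.natDegree := natDegree_pos_iff_degree_pos.mpr (degree_pos_of_irreducible hirr)
  have hGdvd : G ∣ f ^ e := (hdvd_iff _).mp hfe
  have hprime : Prime f := hirr.prime
  rw [hseq]
  constructor
  · intro heq hcon
    have hin : f ^ (e-1) ∈ I := (hmem _).mpr hcon
    have : f ^ e ∣ f ^ (e - 1) := heq ▸ (hdvd_iff _).mp hin
    have hle := Polynomial.natDegree_le_of_dvd this (hmonic.pow (e-1)).ne_zero
    rw [hmonic.natDegree_pow, hmonic.natDegree_pow] at hle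
    have : e * f.natDegree ≤ (e-1) * f.natDegree := hle
    nlinarith [hDpos, he, Nat.sub_lt he Nat.one_pos]
  · intro hne
    obtain ⟨i, hie, hassoc2⟩ := (dvd_prime_pow hprime e).mp hGdvd
    have hGi : G = f ^ i := Polynomial.eq_of_monic_of_associated hGm (hmonic.pow i) hassoc2
    rcases Nat.lt_or_ge i e with hlt | hge
    · exfalso
      apply hne
      refine (hmem _).mp ((hdvd_iff _).mpr ?_)
      rw [hGi]
      exact pow_dvd_pow f (by omega)
    · rw [hGi]
      congr 1
      omega

end Seq

theorem count_main (F : Type) [Field F] [Fintype F] {d e b : ℕ} (he : 0 < e) :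
    Nat.card {V : Matrix (Fin e × Fin d) (Fin b) F //
      (Matrix.of fun i j => V (⟨0, he⟩, i) j) ≠ (0 : Matrix (Fin d) (Fin b) F)}
    = (Fintype.card F ^ (d*b) - 1) * Fintype.card F ^ ((e-1)*(d*b)) := by
  classical
  set z : Fin e := ⟨0, he⟩ with hz
  let Φ : Matrix (Fin e × Fin d) (Fin b) F ≃
      (Matrix (Fin d) (Fin b) F) × ({x : Fin e // x ≠ z} × Fin d → Fin b → F) :=
    { toFun := fun V => (Matrix.of fun i j => V (z, i) j, fun p j => V (p.1.1, p.2) j)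
      invFun := fun W => Matrix.of fun p j =>
        if h : p.1 = z then W.1 p.2 j else W.2 (⟨p.1, h⟩, p.2) j
      left_inv := fun V => by
        funext p j
        show (if h : p.1 = z then V (z, p.2) j else V (p.1, p.2) j) = V p j
        by_cases h : p.1 = z
        · rw [dif_pos h, ← h]
        · rw [dif_neg h]
      right_inv := fun W => by
        refine Prod.ext ?_ ?_
        · funext i j
          show (if h : z = z then W.1 i j else W.2 (⟨z, h⟩, i) j) = W.1 i j
          rw [dif_pos rfl]
        · funext p j
          show (if h : p.1.1 = z then W.1 p.2 j else W.2 (⟨p.1.1, h⟩, p.2) j) = W.2 p j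
          rw [dif_neg p.1.2] }
  have heq := Nat.card_congr
    ((Equiv.subtypeEquiv Φ (fun V => Iff.rfl :
        ∀ V : Matrix (Fin e × Fin d) (Fin b) F,
          ((Matrix.of fun i j => V (z, i) j) ≠ (0 : Matrix (Fin d) (Fin b) F)) ↔
          (Φ V).1 ≠ 0)).trans
      (Equiv.prodSubtypeFstEquivSubtypeProd
        (p := fun W : Matrix (Fin d) (Fin b) F => W ≠ 0)))
  rw [heq, Nat.card_prod]
  have hM : Nat.card (Matrix (Fin d) (Fin b) F) = Fintype.card F ^ (d*b) := by
    rw [Nat.card_congr (Matrix.of (m := Fin d) (n := Fin b) (α := F)).symm,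
      Nat.card_fun, Nat.card_fun]
    simp only [Nat.card_eq_fintype_card, Fintype.card_fin]
    rw [← pow_mul, mul_comm b d]
  have h1 : Nat.card {W : Matrix (Fin d) (Fin b) F // W ≠ 0}
      = Fintype.card F ^ (d*b) - 1 := by
    rw [Nat.card_eq_fintype_card,
      Fintype.card_subtype_compl (p := fun W : Matrix (Fin d) (Fin b) F => W = 0),
      Fintype.card_subtype_eq (0 : Matrix (Fin d) (Fin b) F)]
    rw [← Nat.card_eq_fintype_card, hM]
  have h2 : Nat.card ({x : Fin e // x ≠ z} × Fin d → Fin b → F)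
      = Fintype.card F ^ ((e-1)*(d*b)) := by
    rw [Nat.card_fun, Nat.card_fun, Nat.card_prod]
    have hsub : Nat.card {x : Fin e // x ≠ z} = e - 1 := by
      rw [Nat.card_eq_fintype_card,
        Fintype.card_subtype_compl (p := fun x : Fin e => x = z),
        Fintype.card_subtype_eq z, Fintype.card_fin]
    simp only [Nat.card_eq_fintype_card, Fintype.card_fin, hsub]
    rw [← Nat.card_eq_fintype_card (α := {x : Fin e // x ≠ z})] at *
    rw [hsub, ← pow_mul]
    ring_nf
  rw [h1, h2]

theorem final_calc {q d e b : ℕ} (hq : 0 < q) (he : 0 < e) :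
    (((q ^ (d*b) - 1) * q ^ ((e-1)*(d*b)) : ℕ) : ℚ)
      = (1 - 1 / (q:ℚ) ^ (d*b)) * (q:ℚ) ^ (d*e*b) := by
  obtain ⟨e', rfl⟩ : ∃ e', e = e' + 1 := ⟨e-1, by omega⟩
  have h1 : (1:ℕ) ≤ q ^ (d*b) := Nat.one_le_pow _ _ hq
  rw [Nat.add_sub_cancel, Nat.cast_mul, Nat.cast_sub h1, Nat.cast_pow, Nat.cast_pow,
    Nat.cast_one]
  have hqQ : ((q:ℚ)) ≠ 0 := Nat.cast_ne_zero.mpr (by omega)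
  have hde : d*(e'+1)*b = d*b + e'*(d*b) := by ring
  rw [hde, pow_add]
  have h2 : (q:ℚ)^(d*b) ≠ 0 := pow_ne_zero _ hqQ
  field_simp


end Stmt4Aux

/-- For the Jordan block `J = J_{f^e}` of a monic irreducible `f` of degree `d`,
the number of `V ∈ F^{de×b}` with `minpoly(J̄·V) = f^e` is `(1 - 1/q^{db})·q^{deb}`. -/
theorem stmt4 (F : Type) [Field F] [Fintype F] (b e : ℕ) (hb : 0 < b) (he : 0 < e)
    (f : Polynomial F) (hmonic : f.Monic) (hirr : Irreducible f)
    (d : ℕ) (hd : d = f.natDegree) :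
    (Nat.card {V : Matrix (Fin e × Fin d) (Fin b) F //
        seqMinpoly (fun k => (jordanBlock d e f) ^ k * V) = f ^ e} : ℚ) =
      (1 - 1 / (Fintype.card F : ℚ) ^ (d * b)) * (Fintype.card F : ℚ) ^ (d * e * b) := by
  have hd' : f.natDegree = d := hd.symm
  have hdpos : 0 < d := by
    rw [hd]
    exact natDegree_pos_iff_degree_pos.mpr (degree_pos_of_irreducible hirr)
  set J := jordanBlock d e f with hJ
  have htop : aeval J (f ^ e) = 0 := Stmt4Aux.aeval_jordan_top hdpos hmonic hd' he
  have hpred := Stmt4Aux.aeval_jordan_pred (e := e) hdpos hmonic hd' he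
  have hunit : IsUnit ((aeval (companion d f) (derivative f)) ^ (e-1)) :=
    (Stmt4Aux.isUnit_aeval_deriv hmonic hd' hdpos hirr).pow _
  have key : ∀ V : Matrix (Fin e × Fin d) (Fin b) F,
      (seqMinpoly (fun k => J ^ k * V) = f ^ e) ↔
        (Matrix.of fun i j => V (⟨0, he⟩, i) j) ≠ (0 : Matrix (Fin d) (Fin b) F) := by
    intro V
    rw [Stmt4Aux.minpoly_char J V hmonic hirr he (by rw [htop, Matrix.zero_mul])]
    rw [hpred]
    exact not_congr (Stmt4Aux.kron_mul_eq_zero_iff he _ hunit V)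
  rw [Nat.card_congr (Equiv.subtypeEquivRight key)]
  rw [Stmt4Aux.count_main F he]
  exact Stmt4Aux.final_calc Fintype.card_pos he
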